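/- arXiv:1504.06132 — 3 statements merged into one kernel-verified Lean document; each statement's English description precedes it below -/
import Mathlib

section
/- Let g : ℝ → ℝ be bounded continuous with finite limits g(±∞), G(s) = ∫₀ˢ g. Let Ω be a bounded domain, φ₀ ∈ L²(Ω), and (uₙ) ⊂ L²(Ω) with ‖uₙ‖₂ → ∞ and uₙ/‖uₙ‖₂ → φ₀ in L²(Ω). Let f̄ ∈ L²(Ω). Then (1/‖uₙ‖₂)·(∫_Ω G(uₙ) dx − ∫_Ω f̄·uₙ dx) → ∫_Ω (g(+∞) − f̄)·φ₀⁺ dx − ∫_Ω (g(−∞) − f̄)·φ₀⁻ dx, where φ₀⁺, φ₀⁻ denote the positive and negative parts of φ₀. -/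
open Real Filter MeasureTheory intervalIntegral

open scoped ENNReal

open Real Filter MeasureTheory intervalIntegral
open scoped ENNReal

section Aux

variable {α : Type*} [MeasurableSpace α] {μ : Measure α}

lemma aux_exp : (1 : ℝ≥0∞) / 1 = 1 / 2 + 1 / 2 := by
  rw [div_one, ENNReal.add_halves]

lemma aux_mul_integrable {f w : α → ℝ} (hf : MemLp f 2 μ) (hw : MemLp w 2 μ) :
    Integrable (fun x => f x * w x) μ := by
  have h : MemLp (f • w) 1 μ := hw.smul hf
  exact memLp_one_iff_integrable.mp h

lemma aux_CS {f w : α → ℝ} (hf : MemLp f 2 μ) (hw : MemLp w 2 μ) :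
    |∫ x, f x * w x ∂μ| ≤ (eLpNorm f 2 μ).toReal * (eLpNorm w 2 μ).toReal := by
  have hint := aux_mul_integrable hf hw
  have h1 : |∫ x, f x * w x ∂μ| ≤ ∫ x, ‖f x * w x‖ ∂μ := by
    simpa [Real.norm_eq_abs] using norm_integral_le_integral_norm (μ := μ) (fun x => f x * w x)
  have h2 : ∫ x, ‖f x * w x‖ ∂μ = (eLpNorm (fun x => f x * w x) 1 μ).toReal := by
    rw [integral_norm_eq_lintegral_enorm hint.1, eLpNorm_one_eq_lintegral_enorm]
  have h3 : eLpNorm (fun x => f x * w x) 1 μ ≤ eLpNorm f 2 μ * eLpNorm w 2 μ :=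
    by simpa using eLpNorm_le_eLpNorm_mul_eLpNorm'_of_norm (p := 2) (q := 2) (r := 1) hf.1 hw.1 (· * ·) 1
        (Eventually.of_forall fun x => by simp [Real.norm_eq_abs, abs_mul])
  have h4 : (eLpNorm (fun x => f x * w x) 1 μ).toReal
      ≤ ((eLpNorm f 2 μ) * (eLpNorm w 2 μ)).toReal :=
    ENNReal.toReal_mono (ENNReal.mul_ne_top hf.eLpNorm_ne_top hw.eLpNorm_ne_top) h3
  rw [ENNReal.toReal_mul] at h4
  linarith [h1.trans (le_of_eq h2)]

lemma aux_L1 [IsFiniteMeasure μ] {w : α → ℝ} (hw : MemLp w 2 μ) :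
    ∫ x, |w x| ∂μ ≤ (eLpNorm (fun _ : α => (1 : ℝ)) 2 μ).toReal * (eLpNorm w 2 μ).toReal := by
  have habs : MemLp (fun x => |w x|) 2 μ := by
    simpa [Real.norm_eq_abs] using hw.norm
  have h := aux_CS (memLp_const (1 : ℝ)) habs
  have hnn : 0 ≤ ∫ x, |w x| ∂μ := integral_nonneg fun x => abs_nonneg _
  have he : eLpNorm (fun x => |w x|) 2 μ = eLpNorm w 2 μ := by
    simpa [Real.norm_eq_abs] using eLpNorm_norm (p := 2) (μ := μ) w
  calc ∫ x, |w x| ∂μ = |∫ x, (1 : ℝ) * |w x| ∂μ| := by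
        simp [abs_of_nonneg hnn]
    _ ≤ (eLpNorm (fun _ : α => (1 : ℝ)) 2 μ).toReal * (eLpNorm (fun x => |w x|) 2 μ).toReal := h
    _ = _ := by rw [he]

end Aux

lemma aux_cesaro_top {g : ℝ → ℝ} (hgc : Continuous g) {gp : ℝ}
    (hgp : Tendsto g atTop (nhds gp)) :
    Tendsto (fun s => (∫ τ in (0:ℝ)..s, g τ) / s) atTop (nhds gp) := by
  rw [Metric.tendsto_atTop]
  intro ε hε
  obtain ⟨A, hA⟩ := Metric.tendsto_atTop.mp hgp (ε / 2) (by positivity)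
  set A' : ℝ := max A 0 with hA'def
  set K : ℝ := |(∫ τ in (0:ℝ)..A', g τ) - A' * gp| with hKdef
  have hK0 : 0 ≤ K := abs_nonneg _
  refine ⟨max (A' + 1) (4 * K / ε + 1), fun s hs => ?_⟩
  have hs1 : A' + 1 ≤ s := le_trans (le_max_left _ _) hs
  have hs2 : 4 * K / ε + 1 ≤ s := le_trans (le_max_right _ _) hs
  have hA'0 : 0 ≤ A' := le_max_right _ _
  have hs0 : 0 < s := by linarith
  have hA's : A' ≤ s := by linarith
  have hsplit : (∫ τ in (0:ℝ)..s, g τ) = (∫ τ in (0:ℝ)..A', g τ) + ∫ τ in A'..s, g τ :=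
    (integral_add_adjacent_intervals (hgc.intervalIntegrable _ _)
      (hgc.intervalIntegrable _ _)).symm
  have htail : |(∫ τ in A'..s, g τ) - (s - A') * gp| ≤ ε / 2 * (s - A') := by
    have heq : (∫ τ in A'..s, g τ) - (s - A') * gp = ∫ τ in A'..s, (g τ - gp) := by
      rw [intervalIntegral.integral_sub (hgc.intervalIntegrable _ _)
        (intervalIntegrable_const), intervalIntegral.integral_const, smul_eq_mul]
    rw [heq]
    have hb : ∀ x ∈ Set.uIoc A' s, ‖g x - gp‖ ≤ ε / 2 := by
      intro x hx
      rw [Set.uIoc_of_le hA's] at hx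
      have hxA : A ≤ x := le_of_lt (lt_of_le_of_lt (le_max_left A 0) hx.1)
      have := hA x hxA
      rw [Real.dist_eq] at this
      simpa [Real.norm_eq_abs] using this.le
    have := intervalIntegral.norm_integral_le_of_norm_le_const (C := ε / 2) hb
    simpa [Real.norm_eq_abs, abs_of_nonneg (by linarith : (0:ℝ) ≤ s - A')] using this
  have hKs : K / s < ε / 2 := by
    rw [div_lt_iff₀ hs0]
    have h4 : 4 * K ≤ (s - 1) * ε := (div_le_iff₀ hε).mp (by linarith)
    nlinarith
  rw [Real.dist_eq]
  have heq : (∫ τ in (0:ℝ)..s, g τ) / s - gp =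
      ((∫ τ in (0:ℝ)..A', g τ) - A' * gp + ((∫ τ in A'..s, g τ) - (s - A') * gp)) / s := by
    rw [hsplit]; field_simp; ring
  rw [heq, abs_div, abs_of_pos hs0]
  have hnum : |(∫ τ in (0:ℝ)..A', g τ) - A' * gp + ((∫ τ in A'..s, g τ) - (s - A') * gp)|
      ≤ K + ε / 2 * (s - A') := (abs_add_le _ _).trans (add_le_add le_rfl htail)
  have h5 : ε / 2 * (s - A') / s ≤ ε / 2 := by
    rw [div_le_iff₀ hs0]
    nlinarith
  calc |(∫ τ in (0:ℝ)..A', g τ) - A' * gp + ((∫ τ in A'..s, g τ) - (s - A') * gp)| / s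
      ≤ (K + ε / 2 * (s - A')) / s := by gcongr
    _ = K / s + ε / 2 * (s - A') / s := by ring
    _ ≤ K / s + ε / 2 := by linarith
    _ < ε := by linarith

lemma aux_cesaro_bot {g : ℝ → ℝ} (hgc : Continuous g) {gm : ℝ}
    (hgm : Tendsto g atBot (nhds gm)) :
    Tendsto (fun s => (∫ τ in (0:ℝ)..s, g τ) / s) atBot (nhds gm) := by
  have h1 : Tendsto (fun s => (∫ τ in (0:ℝ)..s, g (-τ)) / s) atTop (nhds gm) :=
    aux_cesaro_top (hgc.comp continuous_neg) (hgm.comp tendsto_neg_atTop_atBot)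
  have h2 : ∀ s : ℝ, (∫ τ in (0:ℝ)..s, g (-τ)) = -∫ τ in (0:ℝ)..(-s), g τ := by
    intro s
    rw [intervalIntegral.integral_comp_neg (f := g)]
    rw [show -(0:ℝ) = 0 by ring]
    exact intervalIntegral.integral_symm 0 (-s)
  have h3 : Tendsto (fun s : ℝ => (∫ τ in (0:ℝ)..(-s), g τ) / (-s)) atTop (nhds gm) := by
    refine Tendsto.congr (fun s => ?_) h1
    rw [h2 s, neg_div, div_neg]
  have h4 := h3.comp tendsto_neg_atBot_atTop
  refine Tendsto.congr (fun s => ?_) h4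
  simp

lemma aux_ptwise {g : ℝ → ℝ} (hgc : Continuous g) {gp gm : ℝ}
    (hgp : Tendsto g atTop (nhds gp)) (hgm : Tendsto g atBot (nhds gm)) (s : ℝ) :
    Tendsto (fun t : ℝ => (∫ τ in (0:ℝ)..(t * s), g τ) / t) atTop
      (nhds (gp * max s 0 - gm * max (-s) 0)) := by
  rcases lt_trichotomy s 0 with hs | hs | hs
  · have hval : gp * max s 0 - gm * max (-s) 0 = s * gm := by
      rw [max_eq_right hs.le, max_eq_left (by linarith : (0:ℝ) ≤ -s)]; ring
    rw [hval]
    have hts : Tendsto (fun t : ℝ => t * s) atTop atBot :=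
      tendsto_id.atTop_mul_const_of_neg hs
    have h1 : Tendsto (fun t : ℝ => (∫ τ in (0:ℝ)..(t * s), g τ) / (t * s)) atTop (nhds gm) :=
      (aux_cesaro_bot hgc hgm).comp hts
    have h2 := h1.const_mul s
    refine Tendsto.congr' ?_ h2
    filter_upwards [eventually_gt_atTop (0:ℝ)] with t ht
    have ht' : t ≠ 0 := ht.ne'
    have hs' : s ≠ 0 := hs.ne
    field_simp
  · subst hs
    simp only [mul_zero, intervalIntegral.integral_same, zero_div]
    simpa using (tendsto_const_nhds : Tendsto (fun _ : ℝ => (0:ℝ)) atTop (nhds 0))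

  · have hval : gp * max s 0 - gm * max (-s) 0 = s * gp := by
      rw [max_eq_left hs.le, max_eq_right (by linarith : -s ≤ (0:ℝ))]; ring
    rw [hval]
    have hts : Tendsto (fun t : ℝ => t * s) atTop atTop :=
      tendsto_id.atTop_mul_const hs
    have h1 : Tendsto (fun t : ℝ => (∫ τ in (0:ℝ)..(t * s), g τ) / (t * s)) atTop (nhds gp) :=
      (aux_cesaro_top hgc hgp).comp hts
    have h2 := h1.const_mul s
    refine Tendsto.congr' ?_ h2
    filter_upwards [eventually_gt_atTop (0:ℝ)] with t ht
    have ht' : t ≠ 0 := ht.ne'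
    have hs' : s ≠ 0 := hs.ne'
    field_simp

/-- Key computation: if `g` is bounded continuous with limits `g(±∞)`, `Ω` is a bounded
domain, `‖uₙ‖₂ → ∞` and `uₙ/‖uₙ‖₂ → φ₀` in `L²(Ω)`, then
`(∫ G(uₙ) − ∫ f̄·uₙ)/‖uₙ‖₂ → ∫ (g(+∞) − f̄)·φ₀⁺ − ∫ (g(−∞) − f̄)·φ₀⁻`. -/
theorem stmt_10
    {n : ℕ} (Ω : Set (EuclideanSpace ℝ (Fin n)))
    (hΩb : Bornology.IsBounded Ω) (hΩm : MeasurableSet Ω)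
    (g : ℝ → ℝ) (hgc : Continuous g) (hgb : ∃ M : ℝ, ∀ s : ℝ, |g s| ≤ M)
    (gp gm : ℝ) (hgp : Tendsto g atTop (nhds gp)) (hgm : Tendsto g atBot (nhds gm))
    (G : ℝ → ℝ) (hG : ∀ s : ℝ, G s = ∫ τ in (0 : ℝ)..s, g τ)
    (fbar : EuclideanSpace ℝ (Fin n) → ℝ) (hfbar : MemLp fbar 2 (volume.restrict Ω))
    (φ₀ : EuclideanSpace ℝ (Fin n) → ℝ) (hφ₀ : MemLp φ₀ 2 (volume.restrict Ω))
    (u : ℕ → EuclideanSpace ℝ (Fin n) → ℝ)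
    (hu : ∀ j, MemLp (u j) 2 (volume.restrict Ω))
    (hnorm : Tendsto (fun j => (eLpNorm (u j) 2 (volume.restrict Ω)).toReal) atTop atTop)
    (hconv : Tendsto (fun j =>
        (eLpNorm (fun x => u j x / (eLpNorm (u j) 2 (volume.restrict Ω)).toReal - φ₀ x)
          2 (volume.restrict Ω)).toReal) atTop (nhds 0)) :
    Tendsto (fun j =>
        ((∫ x, G (u j x) ∂(volume.restrict Ω)) -
          ∫ x, fbar x * u j x ∂(volume.restrict Ω)) /
          (eLpNorm (u j) 2 (volume.restrict Ω)).toReal)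
      atTop
      (nhds ((∫ x, (gp - fbar x) * max (φ₀ x) 0 ∂(volume.restrict Ω)) -
        ∫ x, (gm - fbar x) * max (-(φ₀ x)) 0 ∂(volume.restrict Ω))) := by
  obtain ⟨M, hM⟩ := hgb
  have hM0 : 0 ≤ M := (abs_nonneg (g 0)).trans (hM 0)
  set μ := volume.restrict Ω with hμdef
  haveI : IsFiniteMeasure μ := by
    constructor
    rw [hμdef, Measure.restrict_apply_univ]
    exact hΩb.measure_lt_top
  -- facts about G
  have hGc : Continuous G := by
    have h : Continuous fun s => ∫ τ in (0:ℝ)..s, g τ :=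
      intervalIntegral.continuous_primitive (fun a b => hgc.intervalIntegrable a b) 0
    exact (funext hG : G = _) ▸ h
  have hGlip : ∀ a b : ℝ, |G a - G b| ≤ M * |a - b| := by
    intro a b
    rw [hG a, hG b, integral_interval_sub_left (hgc.intervalIntegrable _ _)
      (hgc.intervalIntegrable _ _)]
    have h := intervalIntegral.norm_integral_le_of_norm_le_const (a := b) (b := a)
      (C := M) (f := g) (fun x _ => by simpa [Real.norm_eq_abs] using hM x)
    simpa [Real.norm_eq_abs, abs_sub_comm a b] using h
  have hG0 : G 0 = 0 := by rw [hG]; exact intervalIntegral.integral_same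
  have hGabs : ∀ s, |G s| ≤ M * |s| := fun s => by simpa [hG0] using hGlip s 0
  -- notation
  have hφ₀int : Integrable φ₀ μ := hφ₀.integrable one_le_two
  set t : ℕ → ℝ := fun j => (eLpNorm (u j) 2 μ).toReal with htdef
  have hvmem : ∀ j, MemLp (fun x => u j x / t j) 2 μ := by
    intro j
    have h1 := (hu j).const_mul (t j)⁻¹
    have he : (fun x => u j x / t j) = fun x => (t j)⁻¹ * u j x :=
      funext fun x => by rw [div_eq_mul_inv, mul_comm]
    exact he ▸ h1
  have hwmem : ∀ j, MemLp (fun x => u j x / t j - φ₀ x) 2 μ := fun j => (hvmem j).sub hφ₀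
  set δ : ℕ → ℝ := fun j => (eLpNorm (fun x => u j x / t j - φ₀ x) 2 μ).toReal with hδdef
  have hδ0 : Tendsto δ atTop (nhds 0) := hconv
  -- integrability of compositions
  have hGint : ∀ j, Integrable (fun x => G (u j x)) μ := by
    intro j
    refine Integrable.mono' (((hu j).integrable one_le_two).abs.const_mul M)
      (hGc.comp_aestronglyMeasurable (hu j).1) (Eventually.of_forall fun x => ?_)
    simpa [Real.norm_eq_abs] using hGabs (u j x)
  have hGtφint : ∀ T : ℝ, Integrable (fun x => G (T * φ₀ x)) μ := by
    intro T
    refine Integrable.mono' (hφ₀int.abs.const_mul (M * |T|))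
      (hGc.comp_aestronglyMeasurable (hφ₀.1.const_mul T)) (Eventually.of_forall fun x => ?_)
    calc ‖G (T * φ₀ x)‖ = |G (T * φ₀ x)| := Real.norm_eq_abs _
      _ ≤ M * |T * φ₀ x| := hGabs _
      _ = M * |T| * |φ₀ x| := by rw [abs_mul, mul_assoc]
  set Φ : ℝ → ℝ := fun T => ∫ x, G (T * φ₀ x) / T ∂μ with hΦdef
  set Ih : ℝ := ∫ x, (gp * max (φ₀ x) 0 - gm * max (-(φ₀ x)) 0) ∂μ with hIhdef
  set If : ℝ := ∫ x, fbar x * φ₀ x ∂μ with hIfdef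
  -- dominated convergence for Φ
  have hΦtendsto : Tendsto Φ atTop (nhds Ih) := by
    rw [hΦdef, hIhdef]
    refine tendsto_integral_filter_of_dominated_convergence (fun x => M * |φ₀ x|)
      ?_ ?_ (hφ₀int.abs.const_mul M) ?_
    · exact Eventually.of_forall fun T => ((hGtφint T).div_const T).1
    · filter_upwards [eventually_ge_atTop (1:ℝ)] with T hT
      refine Eventually.of_forall fun x => ?_
      have hT0 : 0 < T := lt_of_lt_of_le one_pos hT
      rw [Real.norm_eq_abs, abs_div, abs_of_pos hT0, div_le_iff₀ hT0]
      calc |G (T * φ₀ x)| ≤ M * |T * φ₀ x| := hGabs _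
        _ = M * |φ₀ x| * T := by rw [abs_mul, abs_of_pos hT0]; ring
    · refine Eventually.of_forall fun x => ?_
      refine Tendsto.congr (fun T => ?_) (aux_ptwise hgc hgp hgm (φ₀ x))
      rw [hG]
  -- error terms
  set E1 : ℕ → ℝ := fun j => (∫ x, G (u j x) ∂μ) / t j - Φ (t j) with hE1def
  set C2 : ℝ := (eLpNorm (fun _ : EuclideanSpace ℝ (Fin n) => (1:ℝ)) 2 μ).toReal with hC2def
  have hE1 : Tendsto E1 atTop (nhds 0) := by
    refine squeeze_zero_norm' (a := fun j => M * C2 * δ j) ?_ ?_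
    · filter_upwards [hnorm.eventually_ge_atTop 1] with j hj
      have ht0 : 0 < t j := lt_of_lt_of_le one_pos hj
      have hInt1 : Integrable (fun x => G (u j x) / t j) μ := (hGint j).div_const _
      have hInt2 : Integrable (fun x => G (t j * φ₀ x) / t j) μ := (hGtφint (t j)).div_const _
      have hE1eq : E1 j = ∫ x, (G (u j x) / t j - G (t j * φ₀ x) / t j) ∂μ := by
        simp only [hE1def, hΦdef]
        rw [integral_sub hInt1 hInt2, MeasureTheory.integral_div, MeasureTheory.integral_div]
      have hptw : ∀ x, |G (u j x) / t j - G (t j * φ₀ x) / t j|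
          ≤ M * |u j x / t j - φ₀ x| := by
        intro x
        have e : u j x - t j * φ₀ x = t j * (u j x / t j - φ₀ x) := by field_simp
        calc |G (u j x) / t j - G (t j * φ₀ x) / t j|
            = |G (u j x) - G (t j * φ₀ x)| / t j := by
              rw [div_sub_div_same, abs_div, abs_of_pos ht0]
          _ ≤ (M * |u j x - t j * φ₀ x|) / t j := by
              gcongr
              exact hGlip _ _
          _ = M * |u j x / t j - φ₀ x| := by
              rw [e, abs_mul, abs_of_pos ht0]
              field_simp
      have habs : ‖E1 j‖ ≤ ∫ x, M * |u j x / t j - φ₀ x| ∂μ := by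
        rw [hE1eq, Real.norm_eq_abs]
        refine le_trans ?_ (integral_mono (hInt1.sub hInt2).abs
          ((((hwmem j).integrable one_le_two).abs.const_mul M)) fun x => hptw x)
        simpa [Real.norm_eq_abs] using
          norm_integral_le_integral_norm (μ := μ) fun x => G (u j x) / t j - G (t j * φ₀ x) / t j
      refine habs.trans ?_
      rw [MeasureTheory.integral_const_mul]
      have := aux_L1 (hwmem j)
      calc M * ∫ x, |u j x / t j - φ₀ x| ∂μ ≤ M * (C2 * δ j) := by
            refine mul_le_mul_of_nonneg_left ?_ hM0
            simpa [hC2def, hδdef] using this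
        _ = M * C2 * δ j := by ring
    · have := hδ0.const_mul (M * C2)
      simpa using this
  set E2 : ℕ → ℝ := fun j => (∫ x, fbar x * (u j x / t j) ∂μ) - If with hE2def
  have hE2 : Tendsto E2 atTop (nhds 0) := by
    have hb : ∀ j, ‖E2 j‖ ≤ (eLpNorm fbar 2 μ).toReal * δ j := by
      intro j
      have heq : E2 j = ∫ x, fbar x * (u j x / t j - φ₀ x) ∂μ := by
        simp only [hE2def, hIfdef]
        rw [← integral_sub (aux_mul_integrable hfbar (hvmem j))
          (aux_mul_integrable hfbar hφ₀)]
        congr 1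
        funext x
        ring
      rw [heq, Real.norm_eq_abs]
      exact aux_CS hfbar (hwmem j)
    exact squeeze_zero_norm hb (by simpa using hδ0.const_mul (eLpNorm fbar 2 μ).toReal)
  -- final value identity
  have hval : (∫ x, (gp - fbar x) * max (φ₀ x) 0 ∂μ)
      - ∫ x, (gm - fbar x) * max (-(φ₀ x)) 0 ∂μ = 0 + Ih - (0 + If) := by
    have hp : MemLp (fun x => max (φ₀ x) 0) 2 μ := by
      refine MemLp.of_le hφ₀ (hφ₀.1.aemeasurable.max aemeasurable_const).aestronglyMeasurable
        (Eventually.of_forall fun x => ?_)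
      rw [Real.norm_eq_abs, Real.norm_eq_abs, abs_of_nonneg (le_max_right _ _)]
      exact max_le (le_abs_self _) (abs_nonneg _)
    have hm2 : MemLp (fun x => max (-(φ₀ x)) 0) 2 μ := by
      refine MemLp.of_le hφ₀ (hφ₀.1.aemeasurable.neg.max aemeasurable_const).aestronglyMeasurable
        (Eventually.of_forall fun x => ?_)
      rw [Real.norm_eq_abs, Real.norm_eq_abs, abs_of_nonneg (le_max_right _ _)]
      exact max_le (neg_le_abs _) (abs_nonneg _)
    have hgpf : MemLp (fun x => gp - fbar x) 2 μ := (memLp_const gp).sub hfbar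
    have hgmf : MemLp (fun x => gm - fbar x) 2 μ := (memLp_const gm).sub hfbar
    rw [zero_add, zero_add, hIhdef, hIfdef]
    rw [← integral_sub (aux_mul_integrable hgpf hp) (aux_mul_integrable hgmf hm2)]
    have hIhint : Integrable (fun x => gp * max (φ₀ x) 0 - gm * max (-(φ₀ x)) 0) μ :=
      ((hp.integrable one_le_two).const_mul gp).sub ((hm2.integrable one_le_two).const_mul gm)
    rw [← integral_sub hIhint (aux_mul_integrable hfbar hφ₀)]
    refine integral_congr_ae (Eventually.of_forall fun x => ?_)
    have h := max_zero_sub_max_neg_zero_eq_self (φ₀ x)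
    linear_combination (-(fbar x)) * h
  -- assemble
  have hfinal : Tendsto (fun j => E1 j + Φ (t j) - (E2 j + If)) atTop
      (nhds (0 + Ih - (0 + If))) :=
    (hE1.add (hΦtendsto.comp hnorm)).sub (hE2.add tendsto_const_nhds)
  rw [← hval] at hfinal
  refine hfinal.congr fun j => ?_
  show E1 j + Φ (t j) - (E2 j + If)
      = ((∫ x, G (u j x) ∂μ) - ∫ x, fbar x * u j x ∂μ) / t j
  have h1 : (∫ x, fbar x * u j x ∂μ) / t j = ∫ x, fbar x * (u j x / t j) ∂μ := by
    rw [← MeasureTheory.integral_div]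
    congr 1
    funext x
    ring
  rw [sub_div, h1]
  simp only [hE1def, hE2def]
  ring
end

section
/- (Landesman–Lazer implies (SC)) Let g : ℝ → ℝ be bounded continuous with finite limits g(±∞), Ω a bounded domain, f̄ ∈ L²(Ω), and φ₀ ∈ L²(Ω), φ₀ ≠ 0, satisfying the strict inequality ∫_Ω (g(+∞) − f̄)·φ₀⁺ dx − ∫_Ω (g(−∞) − f̄)·φ₀⁻ dx > 0. If (uₙ) ⊂ L²(Ω) satisfies ‖uₙ‖₂ → ∞ and uₙ/‖uₙ‖₂ → φ₀ in L²(Ω), then ∫_Ω G(uₙ) dx − ∫_Ω f̄·uₙ dx → +∞, where G(s) = ∫₀ˢ g. -/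
open Real Filter MeasureTheory intervalIntegral
open scoped ENNReal NNReal

private lemma avg_zero (k : ℝ → ℝ) (hk : Continuous k) (h0 : Tendsto k atTop (nhds 0)) :
    Tendsto (fun s => (∫ τ in (0:ℝ)..s, k τ) / s) atTop (nhds 0) := by
  rw [Metric.tendsto_atTop]
  intro ε hε
  obtain ⟨T₀, hT₀⟩ := Metric.tendsto_atTop.mp h0 (ε/2) (by positivity)
  set T : ℝ := max T₀ 0 with hTdef
  have hTnn : 0 ≤ T := le_max_right _ _
  have hT : ∀ τ, T ≤ τ → |k τ| ≤ ε/2 := by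
    intro τ hτ
    have := hT₀ τ ((le_max_left T₀ 0).trans hτ)
    rw [Real.dist_eq, sub_zero] at this
    exact this.le
  set C : ℝ := |∫ τ in (0:ℝ)..T, k τ| with hCdef
  have hCnn : 0 ≤ C := abs_nonneg _
  refine ⟨max (T+1) (2*C/ε + 1), fun s hs => ?_⟩
  have hs1 : T + 1 ≤ s := (le_max_left _ _).trans hs
  have hs2 : 2*C/ε + 1 ≤ s := (le_max_right _ _).trans hs
  have hsT : T ≤ s := by linarith
  have hs0 : 0 < s := by linarith
  have hsplit : (∫ τ in (0:ℝ)..s, k τ) = (∫ τ in (0:ℝ)..T, k τ) + ∫ τ in T..s, k τ :=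
    (integral_add_adjacent_intervals (hk.intervalIntegrable _ _)
      (hk.intervalIntegrable _ _)).symm
  have htail : |∫ τ in T..s, k τ| ≤ ε/2 * (s - T) := by
    have h := intervalIntegral.norm_integral_le_of_norm_le_const
      (C := ε/2) (f := k) (a := T) (b := s) ?_
    · rwa [Real.norm_eq_abs, abs_of_nonneg (by linarith : (0:ℝ) ≤ s - T)] at h
    · intro x hx
      rw [Set.uIoc_of_le hsT] at hx
      rw [Real.norm_eq_abs]
      exact hT x hx.1.le
  have hbound : |∫ τ in (0:ℝ)..s, k τ| ≤ C + ε/2 * (s - T) := by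
    rw [hsplit]; exact (abs_add_le _ _).trans (by linarith)
  rw [Real.dist_eq, sub_zero, abs_div, abs_of_pos hs0]
  have hCs : C / s < ε / 2 := by
    rw [div_lt_iff₀ hs0]
    have h2C : 2 * C ≤ (s - 1) * ε := (div_le_iff₀ (by positivity)).mp (by linarith)
    nlinarith
  have h2 : |∫ τ in (0:ℝ)..s, k τ| / s ≤ (C + ε/2 * (s - T)) / s :=
    (div_le_div_iff_of_pos_right hs0).mpr hbound
  have h3 : (C + ε/2 * (s - T)) / s ≤ C / s + ε/2 := by
    rw [add_div]
    have : ε/2 * (s - T) / s ≤ ε/2 := by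
      rw [div_le_iff₀ hs0]; nlinarith
    linarith
  linarith

private lemma avg (k : ℝ → ℝ) (hk : Continuous k) (c : ℝ) (hc : Tendsto k atTop (nhds c)) :
    Tendsto (fun s => (∫ τ in (0:ℝ)..s, k τ) / s) atTop (nhds c) := by
  have h0 : Tendsto (fun τ => k τ - c) atTop (nhds 0) := by
    simpa using hc.sub_const c
  have h1 := avg_zero (fun τ => k τ - c) (hk.sub continuous_const) h0
  have h2 : (fun s => (∫ τ in (0:ℝ)..s, (k τ - c)) / s)
      =ᶠ[atTop] (fun s => (∫ τ in (0:ℝ)..s, k τ) / s - c) := by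
    filter_upwards [eventually_ge_atTop (1:ℝ)] with s hs
    have hs0 : s ≠ 0 := by intro h; rw [h] at hs; linarith
    rw [intervalIntegral.integral_sub (hk.intervalIntegrable _ _)
      intervalIntegrable_const, intervalIntegral.integral_const, smul_eq_mul, sub_zero,
      sub_div, mul_comm, mul_div_assoc, div_self hs0, mul_one]
  have h3 := h1.congr' h2
  have h4 := h3.add_const c
  simpa using h4

private lemma l2_mul_integrable {α : Type*} {m : MeasurableSpace α} {μ : Measure α}
    {f h : α → ℝ} (hf : MemLp f 2 μ) (hh : MemLp h 2 μ) :
    Integrable (fun x => f x * h x) μ := by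
  rw [← memLp_one_iff_integrable]
  have key : (1:ℝ≥0∞)/1 = 1/2 + 1/2 := by
    rw [ENNReal.div_add_div_same, div_one]
    norm_num
    rw [ENNReal.div_self two_ne_zero ENNReal.ofNat_ne_top]
  exact hh.smul hf


/-- Landesman–Lazer implies (SC)₊ along a sequence: if
`∫ (g(+∞) − f̄)·φ₀⁺ − ∫ (g(−∞) − f̄)·φ₀⁻ > 0`, `‖uₙ‖₂ → ∞` and
`uₙ/‖uₙ‖₂ → φ₀` in `L²(Ω)`, then `∫ G(uₙ) − ∫ f̄·uₙ → +∞`. -/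
theorem stmt_11
    {n : ℕ} (Ω : Set (EuclideanSpace ℝ (Fin n)))
    (hΩb : Bornology.IsBounded Ω) (hΩm : MeasurableSet Ω)
    (g : ℝ → ℝ) (hgc : Continuous g) (hgb : ∃ M : ℝ, ∀ s : ℝ, |g s| ≤ M)
    (gp gm : ℝ) (hgp : Tendsto g atTop (nhds gp)) (hgm : Tendsto g atBot (nhds gm))
    (G : ℝ → ℝ) (hG : ∀ s : ℝ, G s = ∫ τ in (0 : ℝ)..s, g τ)
    (fbar : EuclideanSpace ℝ (Fin n) → ℝ) (hfbar : MemLp fbar 2 (volume.restrict Ω))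
    (φ₀ : EuclideanSpace ℝ (Fin n) → ℝ) (hφ₀ : MemLp φ₀ 2 (volume.restrict Ω))
    (hφ₀ne : ¬ (φ₀ =ᵐ[volume.restrict Ω] 0))
    (hLL : (∫ x, (gp - fbar x) * max (φ₀ x) 0 ∂(volume.restrict Ω)) -
      (∫ x, (gm - fbar x) * max (-(φ₀ x)) 0 ∂(volume.restrict Ω)) > 0)
    (u : ℕ → EuclideanSpace ℝ (Fin n) → ℝ)
    (hu : ∀ j, MemLp (u j) 2 (volume.restrict Ω))
    (hnorm : Tendsto (fun j => (eLpNorm (u j) 2 (volume.restrict Ω)).toReal) atTop atTop)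
    (hconv : Tendsto (fun j =>
        (eLpNorm (fun x => u j x / (eLpNorm (u j) 2 (volume.restrict Ω)).toReal - φ₀ x)
          2 (volume.restrict Ω)).toReal) atTop (nhds 0)) :
    Tendsto (fun j =>
        (∫ x, G (u j x) ∂(volume.restrict Ω)) -
          ∫ x, fbar x * u j x ∂(volume.restrict Ω)) atTop atTop := by
  classical
  obtain ⟨M, hM⟩ := hgb
  have hM0 : 0 ≤ M := (abs_nonneg _).trans (hM 0)
  set μ := volume.restrict Ω with hμdef
  have hΩfin : volume Ω < ⊤ := hΩb.measure_lt_top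
  haveI : IsFiniteMeasure μ := by
    constructor
    rw [hμdef, Measure.restrict_apply_univ]
    exact hΩfin
  set N : ℕ → ℝ := fun j => (eLpNorm (u j) 2 μ).toReal with hNdef
  have hNnn : ∀ j, 0 ≤ N j := fun j => ENNReal.toReal_nonneg
  -- basic facts about G
  have hG0 : G 0 = 0 := by rw [hG]; simp
  have hGlip : ∀ a b : ℝ, |G a - G b| ≤ M * |a - b| := by
    intro a b
    have hadd := integral_add_adjacent_intervals (μ := volume) (a := (0:ℝ)) (b := b) (c := a)
      (hgc.intervalIntegrable 0 b) (hgc.intervalIntegrable b a)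
    have heq : G a - G b = ∫ τ in b..a, g τ := by rw [hG, hG]; linarith
    rw [heq]
    have h := intervalIntegral.norm_integral_le_of_norm_le_const (C := M)
      (f := g) (a := b) (b := a) (fun x _ => by rw [Real.norm_eq_abs]; exact hM x)
    rwa [Real.norm_eq_abs] at h
  have hGabs : ∀ a : ℝ, |G a| ≤ M * |a| := by
    intro a; simpa [hG0] using hGlip a 0
  have hGtop : Tendsto (fun s => G s / s) atTop (nhds gp) := by
    refine (avg g hgc gp hgp).congr fun s => ?_
    rw [hG]
  have hGbot : Tendsto (fun s => G s / s) atBot (nhds gm) := by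
    have h1 : Tendsto (fun t : ℝ => g (-t)) atTop (nhds gm) := hgm.comp tendsto_neg_atTop_atBot
    have h2 := avg (fun t => g (-t)) (hgc.comp continuous_neg) gm h1
    have h3 : Tendsto (fun r : ℝ => G (-r) / (-r)) atTop (nhds gm) := by
      refine h2.congr fun r => ?_
      have hkey : (∫ t in (0:ℝ)..r, g (-t)) = - ∫ τ in (0:ℝ)..(-r), g τ := by
        rw [intervalIntegral.integral_comp_neg (a := (0:ℝ)) (b := r) (f := g), neg_zero]
        exact intervalIntegral.integral_symm _ _
      rw [hkey, hG, neg_div, div_neg]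
    have h4 := h3.comp tendsto_neg_atBot_atTop
    refine h4.congr fun s => ?_
    simp [Function.comp]
  have hGcont : Continuous G := by
    have : LipschitzWith (Real.toNNReal M) G :=
      LipschitzWith.of_dist_le' fun a b => by
        rw [Real.dist_eq, Real.dist_eq]; exact hGlip a b
    exact this.continuous
  -- membership facts
  have hvmem : ∀ j, MemLp (fun x => u j x / N j) 2 μ := by
    intro j
    simpa [div_eq_inv_mul] using (hu j).const_mul (N j)⁻¹
  have hwmem : ∀ j, MemLp (fun x => u j x / N j - φ₀ x) 2 μ := fun j => (hvmem j).sub hφ₀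
  set d : ℕ → ℝ := fun j => (eLpNorm (fun x => u j x / N j - φ₀ x) 2 μ).toReal with hddef
  have hdconv : Tendsto d atTop (nhds 0) := hconv
  have hdnn : ∀ j, 0 ≤ d j := fun j => ENNReal.toReal_nonneg
  -- integrability facts
  have hGu_int : ∀ j, Integrable (fun x => G (u j x)) μ := by
    intro j
    refine Integrable.mono' (((hu j).integrable one_le_two).abs.const_mul M)
      (hGcont.comp_aestronglyMeasurable (hu j).1) ?_
    exact Eventually.of_forall fun x => by
      rw [Real.norm_eq_abs]; exact hGabs (u j x)
  have hGNφ_int : ∀ j, Integrable (fun x => G (N j * φ₀ x)) μ := by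
    intro j
    refine Integrable.mono' (((hφ₀.integrable one_le_two).abs.const_mul (M * N j)))
      (hGcont.comp_aestronglyMeasurable (((hφ₀.1.const_mul (N j))))) ?_
    refine Eventually.of_forall fun x => ?_
    rw [Real.norm_eq_abs]
    calc |G (N j * φ₀ x)| ≤ M * |N j * φ₀ x| := hGabs _
      _ = M * N j * |φ₀ x| := by rw [abs_mul, abs_of_nonneg (hNnn j)]; ring
  have hI1_int : ∀ j, Integrable (fun x => (G (u j x) - G (N j * φ₀ x)) / N j) μ :=
    fun j => ((hGu_int j).sub (hGNφ_int j)).div_const (N j)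
  have hI2_int : ∀ j, Integrable (fun x => G (N j * φ₀ x) / N j) μ :=
    fun j => (hGNφ_int j).div_const (N j)
  have hNtop : Tendsto N atTop atTop := hnorm
  -- Step Q : dominated convergence
  have hQt : Tendsto (fun j => ∫ x, G (N j * φ₀ x) / N j ∂μ) atTop
      (nhds (∫ x, (gp * max (φ₀ x) 0 - gm * max (-(φ₀ x)) 0) ∂μ)) := by
    refine tendsto_integral_of_dominated_convergence (fun x => M * |φ₀ x|)
      (fun j => (hI2_int j).aestronglyMeasurable)
      ((hφ₀.integrable one_le_two).abs.const_mul M) (fun j => ?_) ?_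
    · refine Eventually.of_forall fun x => ?_
      rcases eq_or_lt_of_le (hNnn j) with h0 | hpos
      · rw [← h0]
        simp [hG0]
        positivity
      · rw [Real.norm_eq_abs, abs_div, abs_of_pos hpos, div_le_iff₀ hpos]
        calc |G (N j * φ₀ x)| ≤ M * |N j * φ₀ x| := hGabs _
          _ = M * |φ₀ x| * N j := by rw [abs_mul, abs_of_pos hpos]; ring
    · refine Eventually.of_forall fun x => ?_
      rcases lt_trichotomy (φ₀ x) 0 with hc | hc | hc
      · have h1 : Tendsto (fun j => N j * φ₀ x) atTop atBot := hNtop.atTop_mul_const_of_neg hc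
        have h2 : Tendsto (fun j => G (N j * φ₀ x) / (N j * φ₀ x)) atTop (nhds gm) :=
          hGbot.comp h1
        have h3 := h2.mul_const (φ₀ x)
        have heq : (fun j => G (N j * φ₀ x) / (N j * φ₀ x) * φ₀ x) =ᶠ[atTop]
            (fun j => G (N j * φ₀ x) / N j) := by
          filter_upwards [hNtop.eventually_ge_atTop 1] with j hj
          have hN0 : N j ≠ 0 := by intro h; rw [h] at hj; linarith
          have hφ0 : φ₀ x ≠ 0 := ne_of_lt hc
          field_simp
        have h4 := h3.congr' heq
        have hval : gp * max (φ₀ x) 0 - gm * max (-(φ₀ x)) 0 = gm * φ₀ x := by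
          rw [max_eq_right hc.le, max_eq_left (by linarith : (0:ℝ) ≤ -(φ₀ x))]
          ring
        rw [hval]
        exact h4
      · rw [hc]
        simpa [hG0] using tendsto_const_nhds (α := ℝ) (f := atTop) (a := (0:ℝ))
      · have h1 : Tendsto (fun j => N j * φ₀ x) atTop atTop := hNtop.atTop_mul_const hc
        have h2 : Tendsto (fun j => G (N j * φ₀ x) / (N j * φ₀ x)) atTop (nhds gp) :=
          hGtop.comp h1
        have h3 := h2.mul_const (φ₀ x)
        have heq : (fun j => G (N j * φ₀ x) / (N j * φ₀ x) * φ₀ x) =ᶠ[atTop]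
            (fun j => G (N j * φ₀ x) / N j) := by
          filter_upwards [hNtop.eventually_ge_atTop 1] with j hj
          have hN0 : N j ≠ 0 := by intro h; rw [h] at hj; linarith
          have hφ0 : φ₀ x ≠ 0 := ne_of_gt hc
          field_simp
        have h4 := h3.congr' heq
        have hval : gp * max (φ₀ x) 0 - gm * max (-(φ₀ x)) 0 = gp * φ₀ x := by
          rw [max_eq_left hc.le, max_eq_right (by linarith : -(φ₀ x) ≤ 0)]
          ring
        rw [hval]
        exact h4
  -- Step R : convergence of the linear term
  have hRt : Tendsto (fun j => ∫ x, fbar x * (u j x / N j) ∂μ) atTop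
      (nhds (∫ x, fbar x * φ₀ x ∂μ)) := by
    set F : Lp ℝ 2 μ := hfbar.toLp fbar with hF
    set Φ : Lp ℝ 2 μ := hφ₀.toLp φ₀ with hΦ
    have hVtend : Tendsto (fun j => (hvmem j).toLp (fun x => u j x / N j)) atTop (nhds Φ) := by
      rw [tendsto_iff_dist_tendsto_zero]
      refine hdconv.congr fun j => ?_
      rw [hddef]
      rw [dist_eq_norm, ← MemLp.toLp_sub (hvmem j) hφ₀, Lp.norm_toLp]
      rfl
    have hinner : Tendsto (fun j => (inner ℝ F ((hvmem j).toLp (fun x => u j x / N j)) : ℝ))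
        atTop (nhds (inner ℝ F Φ)) :=
      (tendsto_const_nhds (x := F)).inner hVtend
    have key : ∀ j, (inner ℝ F ((hvmem j).toLp (fun x => u j x / N j)) : ℝ) =
        ∫ x, fbar x * (u j x / N j) ∂μ := by
      intro j
      rw [MeasureTheory.L2.inner_def]
      refine integral_congr_ae ?_
      filter_upwards [hfbar.coeFn_toLp, (hvmem j).coeFn_toLp] with x hx1 hx2
      rw [RCLike.inner_apply, conj_trivial, hx1, hx2, mul_comm]
    have key0 : (inner ℝ F Φ : ℝ) = ∫ x, fbar x * φ₀ x ∂μ := by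
      rw [MeasureTheory.L2.inner_def]
      refine integral_congr_ae ?_
      filter_upwards [hfbar.coeFn_toLp, hφ₀.coeFn_toLp] with x hx1 hx2
      rw [RCLike.inner_apply, conj_trivial, hx1, hx2, mul_comm]
    rw [← key0]
    exact hinner.congr key
  -- Step P : the error term tends to zero
  set c : ℝ := (μ Set.univ ^ (1 / (1:ℝ≥0∞).toReal - 1 / (2:ℝ≥0∞).toReal)).toReal with hcdef
  have hcnn : 0 ≤ c := ENNReal.toReal_nonneg
  have hintabs : ∀ j, ∫ x, |u j x / N j - φ₀ x| ∂μ ≤ d j * c := by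
    intro j
    have h1 : ∫ x, |u j x / N j - φ₀ x| ∂μ =
        (eLpNorm (fun x => u j x / N j - φ₀ x) 1 μ).toReal := by
      rw [eLpNorm_one_eq_lintegral_enorm,
        ← integral_norm_eq_lintegral_enorm (hwmem j).1]
      simp [Real.norm_eq_abs]
    have h2 := eLpNorm_le_eLpNorm_mul_rpow_measure_univ (p := 1) (q := 2)
      one_le_two (hwmem j).1
    have h3 : (eLpNorm (fun x => u j x / N j - φ₀ x) 1 μ).toReal ≤ d j * c := by
      refine le_trans (ENNReal.toReal_mono ?_ h2) ?_
      · exact ENNReal.mul_ne_top (hwmem j).eLpNorm_ne_top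
          (ENNReal.rpow_ne_top_of_nonneg (by norm_num) (measure_ne_top μ _))
      · rw [ENNReal.toReal_mul]
    rw [h1]
    exact h3
  have habs_int : ∀ j, Integrable (fun x => |u j x / N j - φ₀ x|) μ :=
    fun j => ((hwmem j).integrable one_le_two).abs
  have hPt : Tendsto (fun j => ∫ x, (G (u j x) - G (N j * φ₀ x)) / N j ∂μ) atTop (nhds 0) := by
    have hlim : Tendsto (fun j => M * (d j * c)) atTop (nhds 0) := by
      simpa using (hdconv.mul_const c).const_mul M
    refine squeeze_zero_norm' ?_ hlim
    filter_upwards [hNtop.eventually_ge_atTop 1] with j hj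
    have hNpos : (0:ℝ) < N j := by linarith
    have hN0 : N j ≠ 0 := ne_of_gt hNpos
    have hptwise : ∀ x, ‖(G (u j x) - G (N j * φ₀ x)) / N j‖ ≤ M * |u j x / N j - φ₀ x| := by
      intro x
      have e1 : (u j x - N j * φ₀ x) / N j = u j x / N j - φ₀ x := by
        field_simp
      calc ‖(G (u j x) - G (N j * φ₀ x)) / N j‖
          = |G (u j x) - G (N j * φ₀ x)| / N j := by
            rw [Real.norm_eq_abs, abs_div, abs_of_pos hNpos]
        _ ≤ (M * |u j x - N j * φ₀ x|) / N j := by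
            gcongr
            exact hGlip _ _
        _ = M * |(u j x - N j * φ₀ x) / N j| := by
            rw [abs_div, abs_of_pos hNpos, mul_div_assoc]
        _ = M * |u j x / N j - φ₀ x| := by rw [e1]
    calc ‖∫ x, (G (u j x) - G (N j * φ₀ x)) / N j ∂μ‖
        ≤ ∫ x, ‖(G (u j x) - G (N j * φ₀ x)) / N j‖ ∂μ := norm_integral_le_integral_norm _
      _ ≤ ∫ x, M * |u j x / N j - φ₀ x| ∂μ := by
          refine integral_mono ((hI1_int j).norm) ((habs_int j).const_mul M) ?_
          exact hptwise
      _ = M * ∫ x, |u j x / N j - φ₀ x| ∂μ := integral_const_mul M _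
      _ ≤ M * (d j * c) := by
          exact mul_le_mul_of_nonneg_left (hintabs j) hM0
  -- identify the limit with the Landesman–Lazer expression
  have hp_mem : MemLp (fun x => max (φ₀ x) 0) 2 μ := hφ₀.pos_part
  have hm_mem : MemLp (fun x => max (-(φ₀ x)) 0) 2 μ := hφ₀.neg_part
  have int_p : Integrable (fun x => max (φ₀ x) 0) μ := hp_mem.integrable one_le_two
  have int_m : Integrable (fun x => max (-(φ₀ x)) 0) μ := hm_mem.integrable one_le_two
  have int_fp : Integrable (fun x => fbar x * max (φ₀ x) 0) μ := l2_mul_integrable hfbar hp_mem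
  have int_fm : Integrable (fun x => fbar x * max (-(φ₀ x)) 0) μ := l2_mul_integrable hfbar hm_mem
  have e1 : ∫ x, (gp - fbar x) * max (φ₀ x) 0 ∂μ =
      gp * (∫ x, max (φ₀ x) 0 ∂μ) - ∫ x, fbar x * max (φ₀ x) 0 ∂μ := by
    simp_rw [sub_mul]
    rw [integral_sub (int_p.const_mul gp) int_fp, MeasureTheory.integral_const_mul]
  have e2 : ∫ x, (gm - fbar x) * max (-(φ₀ x)) 0 ∂μ =
      gm * (∫ x, max (-(φ₀ x)) 0 ∂μ) - ∫ x, fbar x * max (-(φ₀ x)) 0 ∂μ := by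
    simp_rw [sub_mul]
    rw [integral_sub (int_m.const_mul gm) int_fm, MeasureTheory.integral_const_mul]
  have e3 : ∫ x, fbar x * φ₀ x ∂μ =
      (∫ x, fbar x * max (φ₀ x) 0 ∂μ) - ∫ x, fbar x * max (-(φ₀ x)) 0 ∂μ := by
    rw [← integral_sub int_fp int_fm]
    refine integral_congr_ae (Eventually.of_forall fun x => ?_)
    show fbar x * φ₀ x = fbar x * max (φ₀ x) 0 - fbar x * max (-(φ₀ x)) 0
    rw [← mul_sub, max_zero_sub_max_neg_zero_eq_self]
  have e4 : ∫ x, (gp * max (φ₀ x) 0 - gm * max (-(φ₀ x)) 0) ∂μ =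
      gp * (∫ x, max (φ₀ x) 0 ∂μ) - gm * (∫ x, max (-(φ₀ x)) 0 ∂μ) := by
    rw [integral_sub (int_p.const_mul gp) (int_m.const_mul gm), MeasureTheory.integral_const_mul,
      MeasureTheory.integral_const_mul]
  set L : ℝ := (∫ x, (gp - fbar x) * max (φ₀ x) 0 ∂μ) -
      ∫ x, (gm - fbar x) * max (-(φ₀ x)) 0 ∂μ with hLdef
  have hLpos : 0 < L := hLL
  have hLeq : 0 + (∫ x, (gp * max (φ₀ x) 0 - gm * max (-(φ₀ x)) 0) ∂μ) -
      (∫ x, fbar x * φ₀ x ∂μ) = L := by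
    rw [hLdef, e1, e2, e3, e4]
    ring
  -- the normalized functional converges to L
  have hsum := (hPt.add hQt).sub hRt
  rw [hLeq] at hsum
  have htarget : Tendsto (fun j => (∫ x, G (u j x) ∂μ) / N j -
      (∫ x, fbar x * u j x ∂μ) / N j) atTop (nhds L) := by
    refine hsum.congr' ?_
    filter_upwards [hNtop.eventually_ge_atTop 1] with j hj
    have hNpos : (0:ℝ) < N j := by linarith
    have hN0 : N j ≠ 0 := ne_of_gt hNpos
    have hA : (∫ x, G (u j x) ∂μ) / N j =
        (∫ x, (G (u j x) - G (N j * φ₀ x)) / N j ∂μ) + ∫ x, G (N j * φ₀ x) / N j ∂μ := by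
      rw [← integral_add (hI1_int j) (hI2_int j), ← MeasureTheory.integral_div]
      refine integral_congr_ae (Eventually.of_forall fun x => ?_)
      show G (u j x) / N j = (G (u j x) - G (N j * φ₀ x)) / N j + G (N j * φ₀ x) / N j
      rw [← add_div, sub_add_cancel]
    have hB : (∫ x, fbar x * u j x ∂μ) / N j = ∫ x, fbar x * (u j x / N j) ∂μ := by
      rw [← MeasureTheory.integral_div]
      refine integral_congr_ae (Eventually.of_forall fun x => ?_)
      show fbar x * u j x / N j = fbar x * (u j x / N j)
      rw [mul_div_assoc]
    rw [hA, hB]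
  -- conclude
  have hfinal := hnorm.atTop_mul_pos hLpos htarget
  refine hfinal.congr' ?_
  filter_upwards [hNtop.eventually_ge_atTop 1] with j hj
  have hNpos : (0:ℝ) < N j := by linarith
  have hN0 : N j ≠ 0 := ne_of_gt hNpos
  rw [mul_sub, mul_div_cancel₀ _ hN0, mul_div_cancel₀ _ hN0]
end

section
/- Let g(s) = arctan(s) + c·cos(s) with |c| arbitrary, G(s) = ∫₀ˢ g. Let Ω be a bounded domain, φ₀ ∈ L²(Ω) with ∫_Ω f̄·φ₀ dx < (π/2)∫_Ω |φ₀| dx for some f̄ ∈ L²(Ω), and φ₀ ≠ 0. If (uₙ) ⊂ L²(Ω) satisfies ‖uₙ‖₂ → ∞ and uₙ/‖uₙ‖₂ → φ₀ in L²(Ω), then (1/‖uₙ‖₂)(∫_Ω G(uₙ)dx − ∫_Ω f̄·uₙ dx) → (π/2)∫_Ω(φ₀⁺+φ₀⁻)dx − ∫_Ω f̄·φ₀ dx > 0, hence ∫_Ω G(uₙ)dx − ∫_Ω f̄·uₙ dx → +∞. -/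
open Real Filter MeasureTheory intervalIntegral

private lemma my_G_formula (c s : ℝ) :
    (∫ τ in (0:ℝ)..s, (Real.arctan τ + c * Real.cos τ)) =
      s * Real.arctan s - Real.log (1 + s^2) / 2 + c * Real.sin s := by
  have key : ∀ τ : ℝ, HasDerivAt (fun y => y * Real.arctan y - Real.log (1 + y^2) / 2
      + c * Real.sin y) (Real.arctan τ + c * Real.cos τ) τ := by
    intro τ
    have hpos : (0:ℝ) < 1 + τ^2 := by positivity
    have h1 : HasDerivAt (fun y : ℝ => y * Real.arctan y)
        (1 * Real.arctan τ + τ * (1 / (1 + τ^2))) τ :=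
      (hasDerivAt_id τ).mul (Real.hasDerivAt_arctan τ)
    have hq : HasDerivAt (fun y : ℝ => 1 + y^2) (2*τ) τ := by
      simpa using ((hasDerivAt_pow 2 τ).const_add 1)
    have h2 : HasDerivAt (fun y : ℝ => Real.log (1 + y^2)) ((1 + τ^2)⁻¹ * (2*τ)) τ :=
      by have := (Real.hasDerivAt_log hpos.ne').comp τ hq; exact this
    have h3 : HasDerivAt (fun y : ℝ => c * Real.sin y) (c * Real.cos τ) τ :=
      (Real.hasDerivAt_sin τ).const_mul c
    have := (h1.sub (h2.div_const 2)).add h3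
    refine this.congr_deriv ?_
    ring
  have hcont : Continuous fun τ : ℝ => Real.arctan τ + c * Real.cos τ :=
    Real.continuous_arctan.add (continuous_const.mul Real.continuous_cos)
  have := intervalIntegral.integral_eq_sub_of_hasDerivAt
      (fun τ _ => key τ) (hcont.intervalIntegrable 0 s)
  rw [this]; simp

private lemma my_arctan_le_self {x : ℝ} (hx : 0 ≤ x) : Real.arctan x ≤ x := by
  have h1 : Real.arctan x ≤ Real.tan (Real.arctan x) :=
    Real.le_tan (by simpa using Real.arctan_strictMono.monotone hx) (Real.arctan_lt_pi_div_two x)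
  rwa [Real.tan_arctan] at h1

private lemma my_sarctan (s : ℝ) : abs (s * Real.arctan s - π/2 * |s|) ≤ 1 := by
  have key : ∀ a : ℝ, 0 ≤ a → |a * Real.arctan a - π/2 * a| ≤ 1 := by
    intro a ha
    have h1 : a * Real.arctan a ≤ π/2 * a := by
      have := (Real.arctan_lt_pi_div_two a).le
      nlinarith
    rw [abs_sub_comm, abs_of_nonneg (by linarith)]
    rcases eq_or_lt_of_le ha with rfl | ha'
    · simp
    · have h2 : π/2 - Real.arctan a = Real.arctan a⁻¹ := by
        rw [Real.arctan_inv_of_pos ha']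
      have h3 : Real.arctan a⁻¹ ≤ a⁻¹ := my_arctan_le_self (by positivity)
      have : a * (π/2 - Real.arctan a) ≤ a * a⁻¹ := by
        rw [h2]; exact mul_le_mul_of_nonneg_left h3 ha
      rw [mul_inv_cancel₀ ha'.ne'] at this
      nlinarith
  rcases le_total 0 s with hs | hs
  · rw [abs_of_nonneg hs]; exact key s hs
  · rw [abs_of_nonpos hs]
    have := key (-s) (by linarith)
    rw [Real.arctan_neg] at this
    have e : -s * -Real.arctan s - π/2 * -s = s * Real.arctan s - π/2 * -s := by ring
    rwa [e] at this

private lemma my_half_log_le {s t : ℝ} (ht : 0 < t) :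
    Real.log (1 + s^2) / 2 ≤ |s| / t + t := by
  have habs : (0:ℝ) ≤ |s| := abs_nonneg s
  have hsq : Real.sqrt |s| ^ 2 = |s| := Real.sq_sqrt habs
  have hsn : 0 ≤ Real.sqrt |s| := Real.sqrt_nonneg _
  have s1 : Real.log (1 + s^2) ≤ 2 * Real.log (1 + |s|) := by
    have h2 : (0:ℝ) < 1 + |s| := by linarith
    calc Real.log (1 + s^2) ≤ Real.log ((1 + |s|)^2) := by
          apply Real.log_le_log (by positivity)
          nlinarith [sq_abs s]
      _ = 2 * Real.log (1 + |s|) := by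
          rw [Real.log_pow]; push_cast; ring
  have s2 : Real.log (1 + |s|) ≤ 2 * Real.log (1 + Real.sqrt |s|) := by
    calc Real.log (1 + |s|) ≤ Real.log ((1 + Real.sqrt |s|)^2) := by
          apply Real.log_le_log (by positivity)
          nlinarith
      _ = 2 * Real.log (1 + Real.sqrt |s|) := by
          rw [Real.log_pow]; push_cast; ring
  have s3 : Real.log (1 + Real.sqrt |s|) ≤ Real.sqrt |s| := by
    have := Real.log_le_sub_one_of_pos (show (0:ℝ) < 1 + Real.sqrt |s| by linarith)
    linarith
  have s4 : 2 * Real.sqrt |s| ≤ |s| / t + t := by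
    rw [div_add' _ _ _ ht.ne', le_div_iff₀ ht]
    nlinarith [sq_nonneg (Real.sqrt |s| - t)]
  linarith

private lemma my_cs2 {α : Type*} [MeasurableSpace α] {μ : Measure α} {f h : α → ℝ}
    (hf : MemLp f 2 μ) (hh : MemLp h 2 μ) :
    |∫ x, f x * h x ∂μ| ≤ (eLpNorm f 2 μ).toReal * (eLpNorm h 2 μ).toReal := by
  have h1 : (∫ x, f x * h x ∂μ) = inner (𝕜 := ℝ) (hf.toLp f) (hh.toLp h) := by
    rw [MeasureTheory.L2.inner_def]
    refine integral_congr_ae ?_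
    filter_upwards [hf.coeFn_toLp, hh.coeFn_toLp] with x hx hy
    simp [hx, hy, RCLike.inner_apply, mul_comm]
  rw [h1]
  calc |inner (𝕜 := ℝ) (hf.toLp f) (hh.toLp h)| ≤ ‖hf.toLp f‖ * ‖hh.toLp h‖ :=
        abs_real_inner_le_norm _ _
    _ = (eLpNorm f 2 μ).toReal * (eLpNorm h 2 μ).toReal := by
        rw [MeasureTheory.Lp.norm_toLp, MeasureTheory.Lp.norm_toLp]

private lemma my_mul_integrable {α : Type*} [MeasurableSpace α] {μ : Measure α} {f h : α → ℝ}
    (hf : MemLp f 2 μ) (hh : MemLp h 2 μ) :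
    Integrable (fun x => f x * h x) μ := by
  have := MeasureTheory.L2.integrable_inner (𝕜 := ℝ) (hf.toLp f) (hh.toLp h)
  refine this.congr ?_
  filter_upwards [hf.coeFn_toLp, hh.coeFn_toLp] with x hx hy
  simp [hx, hy, RCLike.inner_apply, mul_comm]

private lemma my_sqrt_atTop : Tendsto Real.sqrt atTop atTop := by
  refine tendsto_atTop_atTop.2 fun b => ⟨b^2, fun a ha => ?_⟩
  rcases le_total b 0 with hb | hb
  · exact hb.trans (Real.sqrt_nonneg a)
  · rw [show b = Real.sqrt (b^2) by rw [Real.sqrt_sq hb]]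
    exact Real.sqrt_le_sqrt ha
/-- Verification of (SC)₊ for `g(s) = arctan s + c·cos s`: if
`∫ f̄·φ₀ < (π/2)∫|φ₀|`, `φ₀ ≠ 0`, `‖uₙ‖₂ → ∞` and `uₙ/‖uₙ‖₂ → φ₀` in `L²(Ω)`, then
`(∫G(uₙ) − ∫f̄·uₙ)/‖uₙ‖₂ → (π/2)∫(φ₀⁺+φ₀⁻) − ∫f̄·φ₀ > 0`, hence
`∫G(uₙ) − ∫f̄·uₙ → +∞`. -/
theorem stmt_17
    {n : ℕ} (Ω : Set (EuclideanSpace ℝ (Fin n)))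
    (hΩb : Bornology.IsBounded Ω) (hΩm : MeasurableSet Ω)
    (c : ℝ) (g : ℝ → ℝ) (hg : ∀ s : ℝ, g s = Real.arctan s + c * Real.cos s)
    (G : ℝ → ℝ) (hG : ∀ s : ℝ, G s = ∫ τ in (0 : ℝ)..s, g τ)
    (fbar : EuclideanSpace ℝ (Fin n) → ℝ) (hfbar : MemLp fbar 2 (volume.restrict Ω))
    (φ₀ : EuclideanSpace ℝ (Fin n) → ℝ) (hφ₀ : MemLp φ₀ 2 (volume.restrict Ω))
    (hφ₀ne : ¬ (φ₀ =ᵐ[volume.restrict Ω] 0))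
    (hstrip : (∫ x, fbar x * φ₀ x ∂(volume.restrict Ω)) <
      (π / 2) * ∫ x, |φ₀ x| ∂(volume.restrict Ω))
    (u : ℕ → EuclideanSpace ℝ (Fin n) → ℝ)
    (hu : ∀ j, MemLp (u j) 2 (volume.restrict Ω))
    (hnorm : Tendsto (fun j => (eLpNorm (u j) 2 (volume.restrict Ω)).toReal) atTop atTop)
    (hconv : Tendsto (fun j =>
        (eLpNorm (fun x => u j x / (eLpNorm (u j) 2 (volume.restrict Ω)).toReal - φ₀ x)
          2 (volume.restrict Ω)).toReal) atTop (nhds 0)) :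
    Tendsto (fun j =>
        ((∫ x, G (u j x) ∂(volume.restrict Ω)) -
          ∫ x, fbar x * u j x ∂(volume.restrict Ω)) /
          (eLpNorm (u j) 2 (volume.restrict Ω)).toReal)
      atTop
      (nhds ((π / 2) * (∫ x, (max (φ₀ x) 0 + max (-(φ₀ x)) 0) ∂(volume.restrict Ω)) -
        ∫ x, fbar x * φ₀ x ∂(volume.restrict Ω))) ∧
    (π / 2) * (∫ x, (max (φ₀ x) 0 + max (-(φ₀ x)) 0) ∂(volume.restrict Ω)) -
      (∫ x, fbar x * φ₀ x ∂(volume.restrict Ω)) > 0 ∧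
    Tendsto (fun j =>
        (∫ x, G (u j x) ∂(volume.restrict Ω)) -
          ∫ x, fbar x * u j x ∂(volume.restrict Ω)) atTop atTop := by
  set μ := volume.restrict Ω with hμdef
  haveI hfin : IsFiniteMeasure μ := ⟨by rw [Measure.restrict_apply_univ]; exact hΩb.measure_lt_top⟩
  set t : ℕ → ℝ := fun j => (eLpNorm (u j) 2 μ).toReal with htdef
  simp only [show ∀ j, (eLpNorm (u j) 2 μ).toReal = t j from fun _ => rfl] at hnorm hconv ⊢
  -- G explicit formula and continuity
  have hGeq : ∀ s, G s = s * Real.arctan s - Real.log (1 + s^2) / 2 + c * Real.sin s := by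
    intro s
    rw [hG s, show g = fun τ => Real.arctan τ + c * Real.cos τ from funext hg, my_G_formula]
  have hGcont : Continuous G := by
    rw [show G = fun s => s * Real.arctan s - Real.log (1+s^2)/2 + c * Real.sin s
      from funext hGeq]
    have h1 : Continuous fun s : ℝ => Real.log (1+s^2) :=
      (continuous_const.add (continuous_pow 2)).log
        (fun x => by have : (0:ℝ) < 1 + x^2 := by positivity
                     exact this.ne')
    exact ((continuous_id.mul Real.continuous_arctan).sub (h1.div_const 2)).add
      (continuous_const.mul Real.continuous_sin)
  -- pointwise bound
  have hGb : ∀ (s w : ℝ), 0 < w → abs (G s - π/2 * |s|) ≤ (1 + |c|) + (|s| / w + w) := by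
    intro s w hw
    have e : G s - π/2*|s| = (s*Real.arctan s - π/2*|s|) - Real.log (1+s^2)/2
        + c*Real.sin s := by rw [hGeq]; ring
    rw [e]
    obtain ⟨ha1, ha2⟩ := abs_le.mp (my_sarctan s)
    have hlog0 : 0 ≤ Real.log (1+s^2)/2 := by
      have : (0:ℝ) ≤ Real.log (1+s^2) := Real.log_nonneg (by nlinarith [sq_nonneg s])
      linarith
    have hlogle := my_half_log_le (s := s) hw
    have hsin : |c * Real.sin s| ≤ |c| := by
      rw [abs_mul]
      calc |c| * |Real.sin s| ≤ |c| * 1 :=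
            mul_le_mul_of_nonneg_left (Real.abs_sin_le_one s) (abs_nonneg c)
        _ = |c| := mul_one _
    obtain ⟨hb1, hb2⟩ := abs_le.mp hsin
    rw [abs_le]
    constructor <;> linarith
  -- basic integrability
  have hIu : ∀ j, Integrable (u j) μ := fun j => (hu j).integrable one_le_two
  have hIabsu : ∀ j, Integrable (fun x => |u j x|) μ := fun j => (hIu j).abs
  have hIG : ∀ j, Integrable (fun x => G (u j x)) μ := by
    intro j
    refine Integrable.mono' (g := fun x => ((1+|c|) + 2) + (π/2 + 1) * |u j x|)
      ((integrable_const _).add ((hIabsu j).const_mul _))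
      (hGcont.comp_aestronglyMeasurable (hu j).1) ?_
    refine Filter.Eventually.of_forall fun x => ?_
    have := hGb (u j x) 1 one_pos
    rw [Real.norm_eq_abs]
    obtain ⟨h1, h2⟩ := abs_le.mp this
    have h3 : (0:ℝ) ≤ |u j x| := abs_nonneg _
    have hπ : (0:ℝ) < π := Real.pi_pos
    rw [abs_le]
    constructor <;> nlinarith
  have hIX : ∀ j, Integrable (fun x => G (u j x) - π/2 * |u j x|) μ :=
    fun j => (hIG j).sub ((hIabsu j).const_mul _)
  -- MemLp of normalized sequence
  have hvmem : ∀ j, MemLp (fun x => u j x / t j) 2 μ := by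
    intro j
    simpa [div_eq_inv_mul] using (hu j).const_mul (t j)⁻¹
  have hdiff : ∀ j, MemLp (fun x => u j x / t j - φ₀ x) 2 μ :=
    fun j => (hvmem j).sub hφ₀
  have hone : MemLp (fun _ : EuclideanSpace ℝ (Fin n) => (1:ℝ)) 2 μ := memLp_const 1
  set C1 : ℝ := (eLpNorm (fun _ : EuclideanSpace ℝ (Fin n) => (1:ℝ)) 2 μ).toReal with hC1
  set d : ℕ → ℝ := fun j =>
    (eLpNorm (fun x => u j x / t j - φ₀ x) 2 μ).toReal with hddef
  set μr : ℝ := (μ Set.univ).toReal with hμr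
  set A : ℝ := ∫ x, |φ₀ x| ∂μ with hA
  set Fv : ℝ := ∫ x, fbar x * φ₀ x ∂μ with hFv
  -- L¹ bound lemma instance
  have l1le : ∀ (f : EuclideanSpace ℝ (Fin n) → ℝ), MemLp f 2 μ →
      (∫ x, |f x| ∂μ) ≤ (eLpNorm f 2 μ).toReal * C1 := by
    intro f hf
    have h0 : (∫ x, |f x| ∂μ) = ∫ x, |f x| * 1 ∂μ := by simp
    have h1 := my_cs2 hf.norm hone
    rw [eLpNorm_norm] at h1
    simp only [Real.norm_eq_abs] at h1
    calc (∫ x, |f x| ∂μ) ≤ abs (∫ x, |f x| * 1 ∂μ) := by rw [← h0]; exact le_abs_self _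
      _ ≤ (eLpNorm f 2 μ).toReal * C1 := h1
  -- Step A : ∫ |v j| → A
  have hAstep : Tendsto (fun j => ∫ x, |u j x / t j| ∂μ) atTop (nhds A) := by
    rw [← tendsto_sub_nhds_zero_iff, tendsto_zero_iff_abs_tendsto_zero]
    refine squeeze_zero (fun j => abs_nonneg _) (fun j => ?_)
      (by simpa using hconv.mul_const C1)
    show abs ((∫ x, |u j x / t j| ∂μ) - A) ≤ d j * C1
    have hIv : Integrable (fun x => |u j x / t j|) μ := ((hvmem j).integrable one_le_two).abs
    have hIφ : Integrable (fun x => |φ₀ x|) μ := (hφ₀.integrable one_le_two).abs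
    have e1 : (∫ x, |u j x / t j| ∂μ) - A = ∫ x, (|u j x / t j| - |φ₀ x|) ∂μ := by
      rw [hA]
      exact (integral_sub hIv hIφ).symm
    rw [e1]
    calc abs (∫ x, (|u j x / t j| - |φ₀ x|) ∂μ) ≤ ∫ x, abs (|u j x / t j| - |φ₀ x|) ∂μ := by
          simpa [Real.norm_eq_abs] using
            norm_integral_le_integral_norm (fun x => |u j x / t j| - |φ₀ x|) (μ := μ)
      _ ≤ ∫ x, |u j x / t j - φ₀ x| ∂μ := by
          refine integral_mono (hIv.sub hIφ).abs ((hdiff j).integrable one_le_two).abs ?_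
          intro x
          exact abs_abs_sub_abs_le_abs_sub _ _
      _ ≤ d j * C1 := l1le _ (hdiff j)
  -- Step F : ∫ fbar v j → Fv
  have hFstep : Tendsto (fun j => ∫ x, fbar x * (u j x / t j) ∂μ) atTop (nhds Fv) := by
    rw [← tendsto_sub_nhds_zero_iff, tendsto_zero_iff_abs_tendsto_zero]
    refine squeeze_zero (fun j => abs_nonneg _) (fun j => ?_)
      (by simpa using hconv.const_mul (eLpNorm fbar 2 μ).toReal)
    show abs ((∫ x, fbar x * (u j x / t j) ∂μ) - Fv) ≤ (eLpNorm fbar 2 μ).toReal * d j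
    have e1 : (∫ x, fbar x * (u j x / t j) ∂μ) - Fv
        = ∫ x, fbar x * (u j x / t j - φ₀ x) ∂μ := by
      rw [hFv, ← MeasureTheory.integral_sub (my_mul_integrable hfbar (hvmem j)) (my_mul_integrable hfbar hφ₀)]
      congr 1
      funext x
      ring
    rw [e1]
    calc abs (∫ x, fbar x * (u j x / t j - φ₀ x) ∂μ)
      _ ≤ (eLpNorm fbar 2 μ).toReal * d j := my_cs2 hfbar (hdiff j)
  -- ∫|v| = ∫|u|/t for t > 0
  have hvint : ∀ j, 0 < t j →
      (∫ x, |u j x / t j| ∂μ) = (∫ x, |u j x| ∂μ) / t j := by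
    intro j ht0
    rw [← MeasureTheory.integral_div]
    congr 1
    funext x
    rw [abs_div, abs_of_pos ht0]
  -- Step B : error term → 0
  have hBstep : Tendsto (fun j => (∫ x, (G (u j x) - π/2 * |u j x|) ∂μ) / t j)
      atTop (nhds 0) := by
    rw [tendsto_zero_iff_abs_tendsto_zero]
    have hsq := my_sqrt_atTop.comp hnorm
    have hlim : Tendsto (fun j => ((1+|c|) * μr) * (t j)⁻¹ + μr * (Real.sqrt (t j))⁻¹
        + (∫ x, |u j x / t j| ∂μ) * (Real.sqrt (t j))⁻¹) atTop (nhds 0) := by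
      have T1 : Tendsto (fun j => ((1+|c|) * μr) * (t j)⁻¹) atTop (nhds 0) := by
        simpa using (tendsto_inv_atTop_zero.comp hnorm).const_mul ((1+|c|) * μr)
      have T2 : Tendsto (fun j => μr * (Real.sqrt (t j))⁻¹) atTop (nhds 0) := by
        simpa using (tendsto_inv_atTop_zero.comp hsq).const_mul μr
      have T3 : Tendsto (fun j => (∫ x, |u j x / t j| ∂μ) * (Real.sqrt (t j))⁻¹)
          atTop (nhds 0) := by
        simpa using hAstep.mul (tendsto_inv_atTop_zero.comp hsq)
      simpa using (T1.add T2).add T3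
    refine squeeze_zero' (Filter.Eventually.of_forall fun j => abs_nonneg _) ?_ hlim
    filter_upwards [hnorm.eventually_ge_atTop 1] with j ht
    show abs ((∫ x, (G (u j x) - π/2 * |u j x|) ∂μ) / t j)
      ≤ ((1+|c|) * μr) * (t j)⁻¹ + μr * (Real.sqrt (t j))⁻¹
        + (∫ x, |u j x / t j| ∂μ) * (Real.sqrt (t j))⁻¹
    have ht0 : (0:ℝ) < t j := lt_of_lt_of_le one_pos ht
    set w : ℝ := Real.sqrt (t j) with hw
    have hw0 : 0 < w := Real.sqrt_pos.2 ht0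
    have hww : w * w = t j := Real.mul_self_sqrt ht0.le
    have hbd : ∀ x, abs (G (u j x) - π/2 * |u j x|) ≤ ((1+|c|) + w) + |u j x| * w⁻¹ := by
      intro x
      have h := hGb (u j x) w hw0
      have e : |u j x| / w = |u j x| * w⁻¹ := div_eq_mul_inv _ _
      linarith [h, e]
    have hIbnd : Integrable (fun x => ((1+|c|) + w) + |u j x| * w⁻¹) μ :=
      (integrable_const _).add ((hIabsu j).mul_const _)
    calc abs ((∫ x, (G (u j x) - π/2 * |u j x|) ∂μ) / t j)
      _ = abs (∫ x, (G (u j x) - π/2 * |u j x|) ∂μ) / t j := by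
          rw [abs_div, abs_of_pos ht0]
      _ ≤ (∫ x, abs (G (u j x) - π/2 * |u j x|) ∂μ) / t j := by
          gcongr
          simpa [Real.norm_eq_abs] using
            norm_integral_le_integral_norm (fun x => G (u j x) - π/2 * |u j x|) (μ := μ)
      _ ≤ (∫ x, (((1+|c|) + w) + |u j x| * w⁻¹) ∂μ) / t j := by
          gcongr ?_ / _
          exact MeasureTheory.integral_mono (hIX j).abs hIbnd hbd
      _ = (((1+|c|) + w) * μr + (∫ x, |u j x| ∂μ) * w⁻¹) / t j := by
          rw [MeasureTheory.integral_add (integrable_const _) ((hIabsu j).mul_const _),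
            MeasureTheory.integral_const, MeasureTheory.integral_mul_const]
          rw [measureReal_def, ← hμr]
          simp [smul_eq_mul]
          ring
      _ = ((1+|c|) * μr) * (t j)⁻¹ + μr * w⁻¹
            + (∫ x, |u j x / t j| ∂μ) * w⁻¹ := by
          rw [hvint j ht0, ← hww]
          field_simp
  -- eventual decomposition identity
  have hid : ∀ᶠ j in atTop,
      ((∫ x, G (u j x) ∂μ) - ∫ x, fbar x * u j x ∂μ) / t j
        = π/2 * (∫ x, |u j x / t j| ∂μ)
          + (∫ x, (G (u j x) - π/2 * |u j x|) ∂μ) / t j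
          - ∫ x, fbar x * (u j x / t j) ∂μ := by
    filter_upwards [hnorm.eventually_ge_atTop 1] with j ht
    have ht0 : (0:ℝ) < t j := lt_of_lt_of_le one_pos ht
    have e1 : (∫ x, G (u j x) ∂μ)
        = (∫ x, (G (u j x) - π/2 * |u j x|) ∂μ) + π/2 * ∫ x, |u j x| ∂μ := by
      rw [MeasureTheory.integral_sub (hIG j) ((hIabsu j).const_mul _),
        MeasureTheory.integral_const_mul]
      ring
    have e2 : (∫ x, fbar x * (u j x / t j) ∂μ) = (∫ x, fbar x * u j x ∂μ) / t j := by
      rw [← MeasureTheory.integral_div]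
      congr 1
      funext x
      ring
    rw [e1, e2, hvint j ht0]
    ring
  have habs : (∫ x, (max (φ₀ x) 0 + max (-(φ₀ x)) 0) ∂μ) = A := by
    refine integral_congr_ae (Filter.Eventually.of_forall fun x => ?_)
    exact max_zero_add_max_neg_zero_eq_abs_self _
  rw [habs]
  have hpos : 0 < π/2 * A - Fv := sub_pos.2 hstrip
  have hmain : Tendsto (fun j =>
      ((∫ x, G (u j x) ∂μ) - ∫ x, fbar x * u j x ∂μ) / t j) atTop
      (nhds (π/2 * A - Fv)) := by
    have hdec : Tendsto (fun j => π/2 * (∫ x, |u j x / t j| ∂μ)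
        + (∫ x, (G (u j x) - π/2 * |u j x|) ∂μ) / t j
        - ∫ x, fbar x * (u j x / t j) ∂μ) atTop (nhds (π/2 * A + 0 - Fv)) :=
      ((hAstep.const_mul (π/2)).add hBstep).sub hFstep
    rw [add_zero] at hdec
    exact hdec.congr' (hid.mono fun j h => h.symm)
  refine ⟨hmain, hpos, ?_⟩
  have hprod := Filter.Tendsto.pos_mul_atTop hpos hmain hnorm
  refine Tendsto.congr' ?_ hprod
  filter_upwards [hnorm.eventually_ge_atTop 1] with j ht
  have ht0 : (0:ℝ) < t j := lt_of_lt_of_le one_pos ht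
  exact div_mul_cancel₀ _ ht0.ne'
end
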